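/- Let M, K, L be positive integers with K ≤ M. Let Γ₁, …, Γ_L be M×M positive semidefinite Hermitian complex matrices, each of rank at most K, let w₁, …, w_L be positive real numbers with w₁ + ⋯ + w_L = 1, and set Γ = Σ_{ℓ=1}^L w_ℓ Γ_ℓ. Then Γ₁ = Γ₂ = ⋯ = Γ_L if and only if for every k ∈ {1, …, K} and every ℓ ∈ {1, …, L}, the k-th largest eigenvalue of Γ_ℓ equals the k-th largest eigenvalue of Γ. -/

import Mathlib

open scoped BigOperators ComplexOrder
open Matrix

private lemma herm_eigen_congr {M : ℕ} {A B : Matrix (Fin M) (Fin M) ℂ}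
    (hA : A.IsHermitian) (hB : B.IsHermitian) (h : A = B) : hA.eigenvalues = hB.eigenvalues := by
  subst h; rfl

private lemma trace_eq_sum_eigs {M : ℕ} {A : Matrix (Fin M) (Fin M) ℂ} (hA : A.IsHermitian) :
    A.trace = ∑ i, (hA.eigenvalues i : ℂ) := by
  conv_lhs => rw [hA.spectral_theorem, Unitary.conjStarAlgAut_apply]
  rw [Matrix.trace_mul_cycle, Unitary.coe_star_mul_self, Matrix.one_mul, Matrix.trace_diagonal]
  rfl

private lemma trace_sq_eq_sum_eigs_sq {M : ℕ} {A : Matrix (Fin M) (Fin M) ℂ} (hA : A.IsHermitian) :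
    (A * A).trace = ∑ i, ((hA.eigenvalues i : ℂ))^2 := by
  set U := (hA.eigenvectorUnitary : Matrix (Fin M) (Fin M) ℂ) with hUdef
  set D := Matrix.diagonal (RCLike.ofReal ∘ hA.eigenvalues : Fin M → ℂ) with hDdef
  have hU : star U * U = 1 := Unitary.coe_star_mul_self _
  have h2 : ∀ X : Matrix (Fin M) (Fin M) ℂ, star U * (U * X) = X := fun X => by
    rw [← Matrix.mul_assoc, hU, Matrix.one_mul]
  have h1 : A * A = U * (D * D) * star U := by
    conv_lhs => rw [hA.spectral_theorem, Unitary.conjStarAlgAut_apply]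
    simp only [Matrix.mul_assoc, h2, ← hUdef, ← hDdef]
  rw [h1, Matrix.trace_mul_cycle, hU, Matrix.one_mul, Matrix.diagonal_mul_diagonal,
    Matrix.trace_diagonal]
  simp [pow_two]

private noncomputable def matE {M : ℕ} (A : Matrix (Fin M) (Fin M) ℂ) :
    EuclideanSpace ℂ (Fin M × Fin M) :=
  (WithLp.linearEquiv 2 ℂ ((Fin M × Fin M) → ℂ)).symm (fun p => A p.1 p.2)

private lemma inner_matE {M : ℕ} (A B : Matrix (Fin M) (Fin M) ℂ) :
    (inner ℂ (matE A) (matE B) : ℂ) = (Aᴴ * B).trace := by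
  simp only [matE, PiLp.inner_apply, RCLike.inner_apply, Matrix.trace, Matrix.diag,
    Matrix.mul_apply, Matrix.conjTranspose_apply, Fintype.sum_prod_type]
  rw [Finset.sum_comm]
  simp [mul_comm]

private lemma matE_sum {M L : ℕ} (c : Fin L → ℂ) (Γ : Fin L → Matrix (Fin M) (Fin M) ℂ) :
    matE (∑ ℓ, c ℓ • Γ ℓ) = ∑ ℓ, c ℓ • matE (Γ ℓ) := by
  have h : (fun p : Fin M × Fin M => (∑ ℓ, c ℓ • Γ ℓ) p.1 p.2)
      = ∑ ℓ, c ℓ • (fun p : Fin M × Fin M => Γ ℓ p.1 p.2) := by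
    funext p
    simp [Matrix.sum_apply]
  rw [matE, h, map_sum]
  simp only [_root_.map_smul]
  rfl

private lemma matE_inj {M : ℕ} {A B : Matrix (Fin M) (Fin M) ℂ} (h : matE A = matE B) : A = B := by
  ext i j
  exact congrFun (congrArg (WithLp.linearEquiv 2 ℂ ((Fin M × Fin M) → ℂ)) h) (i, j)

private lemma sorted_tail_zero {M K : ℕ} (f : Fin M → ℝ) (h0 : ∀ i, 0 ≤ f i)
    (hcard : Fintype.card {i // f i ≠ 0} ≤ K) {j : Fin M} (hj : (j:ℕ) + K < M) :
    (f ∘ Tuple.sort f) j = 0 := by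
  by_contra hne
  have hmono := Tuple.monotone_sort f
  have hpos : ∀ i : Fin M, j ≤ i → f (Tuple.sort f i) ≠ 0 := by
    intro i hi
    have h1 : (f ∘ Tuple.sort f) j ≤ (f ∘ Tuple.sort f) i := hmono hi
    have h2 : 0 < (f ∘ Tuple.sort f) j := lt_of_le_of_ne (h0 _) (Ne.symm hne)
    exact ne_of_gt (lt_of_lt_of_le h2 h1)
  have hsub : (Finset.Ici j).card ≤ (Finset.univ.filter fun i => f i ≠ 0).card := by
    apply Finset.card_le_card_of_injOn (Tuple.sort f)
    · intro i hi
      simp only [Finset.mem_coe, Finset.mem_filter, Finset.mem_univ, true_and]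
      exact hpos i (Finset.mem_Ici.mp hi)
    · exact (Tuple.sort f).injective.injOn
  rw [Fin.card_Ici] at hsub
  rw [Fintype.card_subtype] at hcard
  have := j.isLt
  omega

private lemma psd_weighted_sum {M L : ℕ} (w : Fin L → ℝ) (hw : ∀ ℓ, 0 ≤ w ℓ)
    (Γ : Fin L → Matrix (Fin M) (Fin M) ℂ) (hpsd : ∀ ℓ, (Γ ℓ).PosSemidef) :
    (∑ ℓ, (w ℓ : ℂ) • Γ ℓ).PosSemidef := by
  refine Finset.sum_induction (fun ℓ => (w ℓ : ℂ) • Γ ℓ) (fun A => A.PosSemidef)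
    (fun a b ha hb => ha.add hb) Matrix.PosSemidef.zero ?_
  intro ℓ _
  refine ⟨?_, ?_⟩
  · show ((w ℓ : ℂ) • Γ ℓ)ᴴ = _
    rw [Matrix.conjTranspose_smul, (hpsd ℓ).1.eq]
    simp [Complex.conj_ofReal]
  · intro x
    exact ((hpsd ℓ).smul (a := (w ℓ : ℂ)) (Complex.zero_le_real.mpr (hw ℓ))).2 x


/-- The `k`-th largest value of a finite real tuple (`k = 0` is the largest). -/
noncomputable def kthLargest {M : ℕ} (f : Fin M → ℝ) (k : Fin M) : ℝ :=
  (f ∘ Tuple.sort f) k.rev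

/-- for PSD Hermitian matrices `Γ₁, …, Γ_L` of rank at most `K ≤ M` and
positive weights summing to one, with `Γ = Σ w_ℓ Γ_ℓ`, one has `Γ₁ = ⋯ = Γ_L` iff for all
`k ∈ {1, …, K}` and all `ℓ`, the `k`-th largest eigenvalue of `Γ_ℓ` equals the `k`-th
largest eigenvalue of `Γ`. -/
theorem covariance_equality_iff_eigenvalues (M K L : ℕ) (hM : 0 < M) (hK : 0 < K)
    (hL : 0 < L) (hKM : K ≤ M)
    (Γ : Fin L → Matrix (Fin M) (Fin M) ℂ)
    (hpsd : ∀ ℓ, (Γ ℓ).PosSemidef)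
    (hrank : ∀ ℓ, (Γ ℓ).rank ≤ K)
    (w : Fin L → ℝ) (hw : ∀ ℓ, 0 < w ℓ) (hsum : ∑ ℓ, w ℓ = 1)
    (hbar : (∑ ℓ, (w ℓ : ℂ) • Γ ℓ).IsHermitian) :
    (∀ ℓ ℓ' : Fin L, Γ ℓ = Γ ℓ') ↔
      (∀ k : Fin M, (k : ℕ) < K → ∀ ℓ : Fin L,
        kthLargest ((hpsd ℓ).isHermitian.eigenvalues) k = kthLargest hbar.eigenvalues k) := by
  classical
  constructor
  · intro heq k hk ℓ
    have hmat : (∑ ℓ', (w ℓ' : ℂ) • Γ ℓ') = Γ ℓ := by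
      have h1 : ∀ ℓ' : Fin L, (w ℓ' : ℂ) • Γ ℓ' = (w ℓ' : ℂ) • Γ ℓ := fun ℓ' => by
        rw [heq ℓ' ℓ]
      rw [Finset.sum_congr rfl fun ℓ' _ => h1 ℓ', ← Finset.sum_smul, ← Complex.ofReal_sum,
        hsum, Complex.ofReal_one, one_smul]
    have he := herm_eigen_congr hbar (hpsd ℓ).isHermitian hmat
    rw [kthLargest, kthLargest, he]
  · intro h ℓ ℓ'
    set B := ∑ ℓ0, (w ℓ0 : ℂ) • Γ ℓ0 with hBdef
    have hBpsd : B.PosSemidef := psd_weighted_sum w (fun ℓ0 => (hw ℓ0).le) Γ hpsd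
    set f : Fin L → Fin M → ℝ := fun ℓ0 => (hpsd ℓ0).isHermitian.eigenvalues with hf
    set fb : Fin M → ℝ := hbar.eigenvalues with hfb
    set g : Fin L → Fin M → ℝ := fun ℓ0 => f ℓ0 ∘ Tuple.sort (f ℓ0) with hg
    set gb : Fin M → ℝ := fb ∘ Tuple.sort fb with hgbdef
    -- tail of sorted eigenvalues is zero (rank ≤ K)
    have htail : ∀ (ℓ0 : Fin L) (j : Fin M), (j:ℕ) + K < M → g ℓ0 j = 0 := by
      intro ℓ0 j hj
      refine sorted_tail_zero (f ℓ0) (fun i => (hpsd ℓ0).eigenvalues_nonneg i) ?_ hj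
      calc Fintype.card {i // f ℓ0 i ≠ 0} = (Γ ℓ0).rank :=
            ((hpsd ℓ0).isHermitian.rank_eq_card_non_zero_eigs).symm
        _ ≤ K := hrank ℓ0
    -- top K sorted eigenvalues match those of B
    have htop : ∀ (ℓ0 : Fin L) (j : Fin M), M ≤ (j:ℕ) + K → g ℓ0 j = gb j := by
      intro ℓ0 j hj
      have hk : ((j.rev : Fin M) : ℕ) < K := by
        have := j.isLt
        rw [Fin.val_rev]
        omega
      have h2 := h j.rev hk ℓ0
      rwa [kthLargest, kthLargest, Fin.rev_rev] at h2
    set t : Fin M → ℝ := fun j => if M ≤ (j:ℕ) + K then gb j else 0 with htdef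
    have hgt : ∀ (ℓ0 : Fin L) (j : Fin M), g ℓ0 j = t j := by
      intro ℓ0 j
      by_cases hc : M ≤ (j:ℕ) + K
      · rw [htdef]
        simp only [if_pos hc]
        exact htop ℓ0 j hc
      · rw [htdef]
        simp only [if_neg hc]
        exact htail ℓ0 j (by omega)
    have hsumf : ∀ ℓ0 : Fin L, ∑ i, f ℓ0 i = ∑ j, t j := by
      intro ℓ0
      rw [← Equiv.sum_comp (Tuple.sort (f ℓ0)) (f ℓ0)]
      exact Finset.sum_congr rfl fun j _ => hgt ℓ0 j
    -- trace of B two ways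
    have hBtr : B.trace = ((∑ j, t j : ℝ) : ℂ) := by
      rw [hBdef, Matrix.trace_sum]
      have hterm : ∀ ℓ0 : Fin L, ((w ℓ0 : ℂ) • Γ ℓ0).trace = (w ℓ0 : ℂ) * ((∑ j, t j : ℝ) : ℂ) := by
        intro ℓ0
        rw [Matrix.trace_smul, trace_eq_sum_eigs (hpsd ℓ0).isHermitian, smul_eq_mul]
        congr 1
        rw [← Complex.ofReal_sum]
        exact_mod_cast congrArg (fun r : ℝ => (r : ℂ)) (hsumf ℓ0)
      rw [Finset.sum_congr rfl fun ℓ0 _ => hterm ℓ0, ← Finset.sum_mul, ← Complex.ofReal_sum,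
        hsum, Complex.ofReal_one, one_mul]
    have hfb_eq : ∑ i, fb i = ∑ j, t j := by
      have h1 := (trace_eq_sum_eigs hbar).symm.trans hBtr
      exact_mod_cast h1
    have hsumgb : ∑ j, gb j = ∑ j, t j := by
      rw [← hfb_eq, ← Equiv.sum_comp (Tuple.sort fb) fb]
      rfl
    -- hence gb = t
    have hgbt : ∀ j, gb j = t j := by
      have hnn : ∀ j : Fin M, 0 ≤ gb j := fun j => hBpsd.eigenvalues_nonneg _
      have hsum0 : ∑ j, (gb j - t j) = 0 := by
        rw [Finset.sum_sub_distrib, hsumgb, sub_self]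
      have hterm : ∀ j ∈ Finset.univ, (0:ℝ) ≤ gb j - t j := by
        intro j _
        rw [htdef]
        by_cases hc : M ≤ (j:ℕ) + K
        · simp [if_pos hc]
        · simp only [if_neg hc, sub_zero]
          exact hnn j
      intro j
      have := (Finset.sum_eq_zero_iff_of_nonneg hterm).mp hsum0 j (Finset.mem_univ j)
      linarith
    have hge : ∀ (ℓ0 : Fin L) (j : Fin M), g ℓ0 j = gb j :=
      fun ℓ0 j => (hgt ℓ0 j).trans (hgbt j).symm
    -- sum of squares equal
    set c : ℝ := ∑ i, (fb i)^2 with hcdef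
    have hsq : ∀ ℓ0 : Fin L, ∑ i, (f ℓ0 i)^2 = c := by
      intro ℓ0
      rw [hcdef, ← Equiv.sum_comp (Tuple.sort (f ℓ0)) (fun i => (f ℓ0 i)^2),
        ← Equiv.sum_comp (Tuple.sort fb) (fun i => (fb i)^2)]
      exact Finset.sum_congr rfl fun j _ => by
        have := hge ℓ0 j
        simp only [hg, hgbdef, Function.comp_apply] at this
        rw [this]
    -- norms
    have hxinner : (inner ℂ (matE B) (matE B) : ℂ) = (c : ℂ) := by
      rw [inner_matE, hBpsd.1.eq, trace_sq_eq_sum_eigs_sq hbar, hcdef]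
      push_cast
      rfl
    have hyinner : ∀ ℓ0 : Fin L, (inner ℂ (matE (Γ ℓ0)) (matE (Γ ℓ0)) : ℂ) = (c : ℂ) := by
      intro ℓ0
      rw [inner_matE, (hpsd ℓ0).1.eq, trace_sq_eq_sum_eigs_sq (hpsd ℓ0).isHermitian, ← hsq ℓ0]
      push_cast
      rfl
    have hxnorm : ‖matE B‖^2 = c := by
      have h1 := inner_self_eq_norm_sq (𝕜 := ℂ) (matE B)
      rw [hxinner] at h1
      simpa using h1.symm
    have hynorm : ∀ ℓ0 : Fin L, ‖matE (Γ ℓ0)‖^2 = c := by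
      intro ℓ0
      have h1 := inner_self_eq_norm_sq (𝕜 := ℂ) (matE (Γ ℓ0))
      rw [hyinner ℓ0] at h1
      simpa using h1.symm
    have hcnn : 0 ≤ c := by rw [← hxnorm]; positivity
    -- weighted average of inner products
    have hxsum : matE B = ∑ ℓ0, (w ℓ0 : ℂ) • matE (Γ ℓ0) := by
      rw [hBdef]; exact matE_sum _ _
    have hinner_sum : (c : ℂ) = ∑ ℓ0, (w ℓ0 : ℂ) * (inner ℂ (matE B) (matE (Γ ℓ0)) : ℂ) := by
      rw [← hxinner]
      nth_rewrite 2 [hxsum]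
      rw [inner_sum]
      simp only [inner_smul_right]
    have havg : ∑ ℓ0, w ℓ0 * (inner ℂ (matE B) (matE (Γ ℓ0)) : ℂ).re = c := by
      have h1 := congrArg Complex.re hinner_sum
      simpa [Complex.mul_re] using h1.symm
    have hle : ∀ ℓ0 : Fin L, (inner ℂ (matE B) (matE (Γ ℓ0)) : ℂ).re ≤ c := by
      intro ℓ0
      have h1 := re_inner_le_norm (𝕜 := ℂ) (matE B) (matE (Γ ℓ0))
      rw [RCLike.re_to_complex] at h1
      have h2 : ‖matE B‖ * ‖matE (Γ ℓ0)‖ = c := by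
        have hb : ‖matE B‖ = Real.sqrt c := by
          rw [← hxnorm, Real.sqrt_sq (norm_nonneg _)]
        have hy : ‖matE (Γ ℓ0)‖ = Real.sqrt c := by
          rw [← hynorm ℓ0, Real.sqrt_sq (norm_nonneg _)]
        rw [hb, hy, Real.mul_self_sqrt hcnn]
      linarith
    have hre_eq : ∀ ℓ0 : Fin L, (inner ℂ (matE B) (matE (Γ ℓ0)) : ℂ).re = c := by
      by_contra hcon
      push_neg at hcon
      obtain ⟨ℓ0, hℓ0⟩ := hcon
      have hlt : (inner ℂ (matE B) (matE (Γ ℓ0)) : ℂ).re < c := lt_of_le_of_ne (hle ℓ0) hℓ0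
      have hstrict : ∑ ℓ1, w ℓ1 * (inner ℂ (matE B) (matE (Γ ℓ1)) : ℂ).re < ∑ ℓ1, w ℓ1 * c := by
        refine Finset.sum_lt_sum (fun i _ => mul_le_mul_of_nonneg_left (hle i) (hw i).le)
          ⟨ℓ0, Finset.mem_univ _, mul_lt_mul_of_pos_left hlt (hw ℓ0)⟩
      rw [havg, ← Finset.sum_mul, hsum, one_mul] at hstrict
      exact lt_irrefl c hstrict
    -- conclude each Γ ℓ0 = B
    have hfinal : ∀ ℓ0 : Fin L, Γ ℓ0 = B := by
      intro ℓ0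
      have hns : ‖matE B - matE (Γ ℓ0)‖^2 = 0 := by
        have h1 := norm_sub_sq (𝕜 := ℂ) (matE B) (matE (Γ ℓ0))
        rw [RCLike.re_to_complex] at h1
        rw [h1, hxnorm, hynorm ℓ0, hre_eq ℓ0]
        ring
      have h2 : matE B - matE (Γ ℓ0) = 0 := by
        have h3 : ‖matE B - matE (Γ ℓ0)‖ = 0 := by
          have := sq_eq_zero_iff.mp hns
          exact this
        exact norm_eq_zero.mp h3
      exact (matE_inj (sub_eq_zero.mp h2)).symm
    rw [hfinal ℓ, hfinal ℓ']
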